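/- arXiv:2206.05764 — 10 statements merged into one kernel-verified Lean document; each statement's English description precedes it below -/
import Mathlib

section
/- Suppose conditions (a) and (b) hold for the family {f_{(I,J)}}. Then for every (I,J) ∈ 𝓘 with J ≠ ∅ one has f_{(I,J)}(x) = (min_{i∈I} f_i(x) − max_{j∈J} f_j(x))⁺ for all x ∈ X, and for every (I,∅) ∈ 𝓘 one has f_{(I,∅)}(x) = min_{i∈I} f_i(x) for all x ∈ X. Conversely, if for every (I,J) ∈ 𝓘 the function f_{(I,J)} equals (min_{i∈I} f_i − max_{j∈J} f_j)⁺ when J ≠ ∅ and min_{i∈I} f_i when J = ∅, then conditions (a) and (b) both hold. -/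
open Finset

private lemma s2m_id1 (A c : ℝ) : A = max (A - c) 0 + min c A := by
  simp only [max_def, min_def]; split_ifs <;> linarith

private lemma s2m_id2 (A B c : ℝ) :
    max (A - B) 0 = max (min c A - B) 0 + max (A - max c B) 0 := by
  simp only [max_def, min_def]; split_ifs <;> linarith

/-- Splitting the index set `{S : I ⊆ S, J ⊆ Sᶜ}` according to whether `j ∈ S`. -/
private lemma s2m_split {ι : Type*} [Fintype ι] [DecidableEq ι] (g : Finset ι → ℝ)
    (I J : Finset ι) (j : ι) :
    ∑ S ∈ univ.powerset.filter (fun S => I ⊆ S ∧ J ⊆ Sᶜ), g S =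
    ∑ S ∈ univ.powerset.filter (fun S => insert j I ⊆ S ∧ J ⊆ Sᶜ), g S +
    ∑ S ∈ univ.powerset.filter (fun S => I ⊆ S ∧ insert j J ⊆ Sᶜ), g S := by
  rw [← Finset.sum_filter_add_sum_filter_not
      (univ.powerset.filter (fun S => I ⊆ S ∧ J ⊆ Sᶜ)) (fun S => j ∈ S) g]
  congr 1
  · rw [Finset.filter_filter]
    apply Finset.sum_congr _ (fun _ _ => rfl)
    apply Finset.filter_congr
    intro S _
    simp only [Finset.insert_subset_iff]
    tauto
  · rw [Finset.filter_filter]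
    apply Finset.sum_congr _ (fun _ _ => rfl)
    apply Finset.filter_congr
    intro S _
    simp only [Finset.insert_subset_iff, Finset.mem_compl]
    tauto

section Aux

variable {X ι : Type*} [Fintype ι] [DecidableEq ι] {f : Finset ι → Finset ι → X → ℝ}

/-- From condition (a) and nonnegativity: if `f I J x ≠ 0` then `f {i} {j} x ≠ 0`
for every `i ∈ I`, `j ∈ J`. -/
private lemma s2m_pos (hnn : ∀ I J x, 0 ≤ f I J x)
    (ha : ∀ I J : Finset ι, I.Nonempty → Disjoint I J → ∀ x,
        f I J x = ∑ S ∈ univ.powerset.filter (fun S => I ⊆ S ∧ J ⊆ Sᶜ), f S Sᶜ x)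
    {I J : Finset ι} (hI : I.Nonempty) (hd : Disjoint I J) {x : X}
    (h : f I J x ≠ 0) {i j : ι} (hi : i ∈ I) (hj : j ∈ J) : f {i} {j} x ≠ 0 := by
  have hij : i ≠ j := fun h' => Finset.disjoint_left.mp hd hi (h' ▸ hj)
  rw [ha I J hI hd x] at h
  obtain ⟨S, hS, hgS⟩ := Finset.exists_ne_zero_of_sum_ne_zero h
  simp only [Finset.mem_filter, Finset.mem_powerset] at hS
  have hpos : 0 < f S Sᶜ x := (hnn _ _ _).lt_of_ne (Ne.symm hgS)
  have hle : f S Sᶜ x ≤ f {i} {j} x := by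
    rw [ha {i} {j} (Finset.singleton_nonempty i)
      (Finset.disjoint_singleton.mpr hij) x]
    apply Finset.single_le_sum (f := fun S => f S Sᶜ x) (fun k _ => hnn _ _ _)
    simp only [Finset.mem_filter, Finset.mem_powerset, Finset.singleton_subset_iff]
    exact ⟨Finset.subset_univ S, hS.2.1 hi, hS.2.2 hj⟩
  exact (lt_of_lt_of_le hpos hle).ne'

/-- From condition (a) and nonnegativity: `f` is antitone in `(I, J)`. -/
private lemma s2m_mono (hnn : ∀ I J x, 0 ≤ f I J x)
    (ha : ∀ I J : Finset ι, I.Nonempty → Disjoint I J → ∀ x,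
        f I J x = ∑ S ∈ univ.powerset.filter (fun S => I ⊆ S ∧ J ⊆ Sᶜ), f S Sᶜ x)
    {I I' J J' : Finset ι} (hI : I.Nonempty) (hI' : I'.Nonempty)
    (hd : Disjoint I J) (hd' : Disjoint I' J') (hII : I ⊆ I') (hJJ : J ⊆ J') (x : X) :
    f I' J' x ≤ f I J x := by
  rw [ha I J hI hd x, ha I' J' hI' hd' x]
  apply Finset.sum_le_sum_of_subset_of_nonneg
  · intro S hS
    simp only [Finset.mem_filter, Finset.mem_powerset] at hS ⊢
    exact ⟨hS.1, hII.trans hS.2.1, hJJ.trans hS.2.2⟩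
  · intro S _ _; exact hnn _ _ _

/-- From conditions (a) and (b): the minimum formula `f I ∅ = min_{i ∈ I} f {i} ∅`. -/
private lemma s2m_min (hnn : ∀ I J x, 0 ≤ f I J x)
    (ha : ∀ I J : Finset ι, I.Nonempty → Disjoint I J → ∀ x,
        f I J x = ∑ S ∈ univ.powerset.filter (fun S => I ⊆ S ∧ J ⊆ Sᶜ), f S Sᶜ x)
    (hb : ∀ i j : ι, i ≠ j →
        Function.support (f {i} {j}) ∩ Function.support (f {j} {i}) = ∅)
    (I : Finset ι) (hI : I.Nonempty) (x : X) :
    f I ∅ x = I.inf' hI (fun i => f {i} ∅ x) := by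
  induction hI using Finset.Nonempty.cons_induction with
  | singleton i => simp
  | cons k I hkI hI ih =>
    rw [Finset.inf'_cons (H := hI), ← ih, Finset.cons_eq_insert]
    have hsplit : f I ∅ x = f (insert k I) ∅ x + f I {k} x := by
      rw [ha I ∅ hI (Finset.disjoint_empty_right I) x,
          ha (insert k I) ∅ (Finset.insert_nonempty k I) (Finset.disjoint_empty_right _) x,
          ha I {k} hI (Finset.disjoint_singleton_right.mpr hkI) x]
      simpa using s2m_split (fun S => f S Sᶜ x) I ∅ k
    have hle_k : f (insert k I) ∅ x ≤ f {k} ∅ x :=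
      s2m_mono hnn ha (Finset.singleton_nonempty k) (Finset.insert_nonempty k I)
        (Finset.disjoint_empty_right _) (Finset.disjoint_empty_right _)
        (Finset.singleton_subset_iff.mpr (Finset.mem_insert_self k I))
        (Finset.empty_subset _) x
    rcases eq_or_ne (f I {k} x) 0 with h0 | h0
    · have h1 : f (insert k I) ∅ x = f I ∅ x := by linarith
      rw [h1, inf_eq_right.mpr (h1 ▸ hle_k)]
    · have hzero : ∀ i ∈ I, f {k} {i} x = 0 := by
        intro i hiI
        have hik : f {i} {k} x ≠ 0 :=
          s2m_pos hnn ha hI (Finset.disjoint_singleton_right.mpr hkI) h0 hiI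
            (Finset.mem_singleton_self k)
        by_contra hne
        have hki : k ≠ i := fun h' => hkI (h' ▸ hiI)
        have := hb k i hki
        rw [Set.eq_empty_iff_forall_notMem] at this
        exact this x ⟨hne, hik⟩
      have heq : f (insert k I) ∅ x = f {k} ∅ x := by
        rw [ha (insert k I) ∅ (Finset.insert_nonempty k I) (Finset.disjoint_empty_right _) x,
            ha {k} ∅ (Finset.singleton_nonempty k) (Finset.disjoint_empty_right _) x]
        apply Finset.sum_subset
        · intro S hS
          simp only [Finset.mem_filter, Finset.mem_powerset, Finset.insert_subset_iff,
            Finset.singleton_subset_iff] at hS ⊢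
          exact ⟨hS.1, hS.2.1.1, hS.2.2⟩
        · intro S hS hS'
          simp only [Finset.mem_filter, Finset.mem_powerset, Finset.insert_subset_iff,
            Finset.singleton_subset_iff] at hS hS'
          have hkS : k ∈ S := hS.2.1
          have : ¬ I ⊆ S := fun hc => hS' ⟨hS.1, ⟨hkS, hc⟩, Finset.empty_subset _⟩
          obtain ⟨i, hiI, hiS⟩ := Finset.not_subset.mp this
          have hki : k ≠ i := fun h' => hkI (h' ▸ hiI)
          have h1 : f S Sᶜ x ≤ f {k} {i} x := by
            rw [ha {k} {i} (Finset.singleton_nonempty k)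
              (Finset.disjoint_singleton.mpr hki) x]
            apply Finset.single_le_sum (f := fun S => f S Sᶜ x) (fun _ _ => hnn _ _ _)
            simp only [Finset.mem_filter, Finset.mem_powerset, Finset.singleton_subset_iff,
              Finset.mem_compl]
            exact ⟨Finset.subset_univ S, hkS, hiS⟩
          have h2 := hnn S Sᶜ x
          have h3 := hzero i hiI
          linarith
      rw [heq, inf_eq_left.mpr ?_]
      have hnn' := hnn I {k} x
      linarith

/-- Forward direction: conditions (a), (b) plus the minimum formula give the
general formula, by induction on `J`. -/
private lemma s2m_formula (hnn : ∀ I J x, 0 ≤ f I J x)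
    (ha : ∀ I J : Finset ι, I.Nonempty → Disjoint I J → ∀ x,
        f I J x = ∑ S ∈ univ.powerset.filter (fun S => I ⊆ S ∧ J ⊆ Sᶜ), f S Sᶜ x)
    (hmin : ∀ (I : Finset ι) (hI : I.Nonempty) (x : X),
        f I ∅ x = I.inf' hI (fun i => f {i} ∅ x)) :
    ∀ J I : Finset ι, ∀ hI : I.Nonempty, Disjoint I J → ∀ x,
        f I J x =
          if hJ : J.Nonempty then
            max (I.inf' hI (fun i => f {i} ∅ x) - J.sup' hJ (fun j => f {j} ∅ x)) 0
          else
            I.inf' hI (fun i => f {i} ∅ x) := by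
  intro J
  induction J using Finset.induction_on with
  | empty =>
    intro I hI hd x
    rw [dif_neg (by simp)]
    exact hmin I hI x
  | @insert j J' hjJ' ih =>
    intro I hI hd x
    rw [Finset.disjoint_insert_right] at hd
    obtain ⟨hjI, hd'⟩ := hd
    have hdI : Disjoint (insert j I) J' := by
      rw [Finset.insert_eq, Finset.disjoint_union_left]
      exact ⟨Finset.disjoint_singleton_left.mpr hjJ', hd'⟩
    have hdJ : Disjoint I (insert j J') := by
      rw [Finset.insert_eq, Finset.disjoint_union_right]
      exact ⟨Finset.disjoint_singleton_right.mpr hjI, hd'⟩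
    have hsplit : f I J' x = f (insert j I) J' x + f I (insert j J') x := by
      rw [ha I J' hI hd' x, ha (insert j I) J' (Finset.insert_nonempty j I) hdI x,
          ha I (insert j J') hI hdJ x]
      exact s2m_split (fun S => f S Sᶜ x) I J' j
    set a : ι → ℝ := fun i => f {i} ∅ x with ha'
    have e1 := ih I hI hd' x
    have e2 := ih (insert j I) (Finset.insert_nonempty j I) hdI x
    have hinf : (insert j I).inf' (Finset.insert_nonempty j I) a = a j ⊓ I.inf' hI a :=
      Finset.inf'_insert (H := hI) (f := a)
    rw [dif_pos (Finset.insert_nonempty j J')]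
    rcases J'.eq_empty_or_nonempty with rfl | hJ'
    · rw [dif_neg (by simp)] at e1
      rw [dif_neg (by simp)] at e2
      rw [hinf] at e2
      have h2 : (insert j (∅ : Finset ι)).sup' (Finset.insert_nonempty j ∅) a = a j := by
        simp
      rw [h2]
      have hid := s2m_id1 (I.inf' hI a) (a j)
      linarith
    · rw [dif_pos hJ'] at e1
      rw [dif_pos hJ', hinf] at e2
      have h2 : (insert j J').sup' (Finset.insert_nonempty j J') a = a j ⊔ J'.sup' hJ' a :=
        Finset.sup'_insert (H := hJ') (f := a)
      rw [h2]
      have hid := s2m_id2 (I.inf' hI a) (J'.sup' hJ' a) (a j)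
      linarith

/-- Backward direction: the formula implies the one-element split identity. -/
private lemma s2m_fsplit
    (h : ∀ I J : Finset ι, ∀ hI : I.Nonempty, Disjoint I J → ∀ x,
        f I J x =
          if hJ : J.Nonempty then
            max (I.inf' hI (fun i => f {i} ∅ x) - J.sup' hJ (fun j => f {j} ∅ x)) 0
          else
            I.inf' hI (fun i => f {i} ∅ x))
    {I J : Finset ι} (hI : I.Nonempty) (hd : Disjoint I J) {j : ι}
    (hjI : j ∉ I) (hjJ : j ∉ J) (x : X) :
    f I J x = f (insert j I) J x + f I (insert j J) x := by
  set a : ι → ℝ := fun i => f {i} ∅ x with ha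
  have hdI : Disjoint (insert j I) J := by
    rw [Finset.insert_eq, Finset.disjoint_union_left]
    exact ⟨Finset.disjoint_singleton_left.mpr hjJ, hd⟩
  have hdJ : Disjoint I (insert j J) := by
    rw [Finset.insert_eq, Finset.disjoint_union_right]
    exact ⟨Finset.disjoint_singleton_right.mpr hjI, hd⟩
  rw [h I J hI hd x, h (insert j I) J (Finset.insert_nonempty j I) hdI x,
      h I (insert j J) hI hdJ x]
  rw [dif_pos (Finset.insert_nonempty j J)]
  have hinf : (insert j I).inf' (Finset.insert_nonempty j I) a = a j ⊓ I.inf' hI a :=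
    Finset.inf'_insert (H := hI) (f := a)
  rcases J.eq_empty_or_nonempty with rfl | hJ
  · rw [dif_neg (by simp), dif_neg (by simp), hinf]
    have h2 : (insert j (∅ : Finset ι)).sup' (Finset.insert_nonempty j ∅) a = a j := by
      simp
    rw [h2]
    have := s2m_id1 (I.inf' hI a) (a j)
    linarith
  · rw [dif_pos hJ, dif_pos hJ, hinf,
      Finset.sup'_insert (H := hJ) (f := a)]
    exact s2m_id2 (I.inf' hI a) (J.sup' hJ a) (a j)

/-- Backward direction: the split identity implies condition (a), by downward
induction on the number of indices not in `I ∪ J`. -/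
private lemma s2m_back_a
    (hfs : ∀ {I J : Finset ι}, I.Nonempty → Disjoint I J → ∀ {j : ι},
      j ∉ I → j ∉ J → ∀ x, f I J x = f (insert j I) J x + f I (insert j J) x) :
    ∀ (n : ℕ) (I J : Finset ι), ((I ∪ J)ᶜ).card = n → I.Nonempty → Disjoint I J → ∀ x,
      f I J x = ∑ S ∈ univ.powerset.filter (fun S => I ⊆ S ∧ J ⊆ Sᶜ), f S Sᶜ x := by
  intro n
  induction n with
  | zero =>
    intro I J hc hI hd x
    have hu : I ∪ J = univ := (Finset.compl_eq_empty_iff _).mp (Finset.card_eq_zero.mp hc)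
    have hfilter : univ.powerset.filter (fun S => I ⊆ S ∧ J ⊆ Sᶜ) = {I} := by
      ext S
      simp only [Finset.mem_filter, Finset.mem_powerset, Finset.mem_singleton]
      constructor
      · rintro ⟨-, hIS, hJS⟩
        refine Finset.Subset.antisymm ?_ hIS
        intro s hs
        have hsu : s ∈ I ∪ J := hu ▸ Finset.mem_univ s
        rcases Finset.mem_union.mp hsu with h' | h'
        · exact h'
        · exact absurd hs (Finset.mem_compl.mp (hJS h'))
      · rintro rfl
        refine ⟨Finset.subset_univ _, Finset.Subset.rfl, ?_⟩
        intro s hs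
        exact Finset.mem_compl.mpr (fun h' => Finset.disjoint_left.mp hd h' hs)
    have hJc : Iᶜ = J := by
      apply Finset.Subset.antisymm
      · intro s hs
        have hsu : s ∈ I ∪ J := hu ▸ Finset.mem_univ s
        rcases Finset.mem_union.mp hsu with h' | h'
        · exact absurd h' (Finset.mem_compl.mp hs)
        · exact h'
      · intro s hs
        exact Finset.mem_compl.mpr (fun h' => Finset.disjoint_left.mp hd h' hs)
    rw [hfilter, Finset.sum_singleton, hJc]
  | succ n ih =>
    intro I J hc hI hd x
    obtain ⟨j, hj⟩ : ((I ∪ J)ᶜ).Nonempty := Finset.card_pos.mp (by rw [hc]; exact n.succ_pos)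
    have hjIJ := Finset.mem_compl.mp hj
    have hjI : j ∉ I := fun h' => hjIJ (Finset.mem_union_left J h')
    have hjJ : j ∉ J := fun h' => hjIJ (Finset.mem_union_right I h')
    have hdI : Disjoint (insert j I) J := by
      rw [Finset.insert_eq, Finset.disjoint_union_left]
      exact ⟨Finset.disjoint_singleton_left.mpr hjJ, hd⟩
    have hdJ : Disjoint I (insert j J) := by
      rw [Finset.insert_eq, Finset.disjoint_union_right]
      exact ⟨Finset.disjoint_singleton_right.mpr hjI, hd⟩
    have hc1 : (((insert j I) ∪ J)ᶜ).card = n := by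
      rw [Finset.insert_union, Finset.compl_insert, Finset.card_erase_of_mem hj, hc]; rfl
    have hc2 : ((I ∪ insert j J)ᶜ).card = n := by
      rw [Finset.union_insert, Finset.compl_insert, Finset.card_erase_of_mem hj, hc]; rfl
    rw [s2m_split (fun S => f S Sᶜ x) I J j,
        ← ih (insert j I) J hc1 (Finset.insert_nonempty j I) hdI x,
        ← ih I (insert j J) hc2 hI hdJ x]
    exact hfs hI hd hjI hjJ x

end Aux

/-- Main theorem (Theorem 1 of the paper): conditions (a) and (b) hold for the family
`{f_{(I,J)}}` if and only if, for every `(I,J) ∈ 𝓘`,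
`f_{(I,J)} = (min_{i∈I} f_i − max_{j∈J} f_j)⁺` when `J ≠ ∅` and `f_{(I,∅)} = min_{i∈I} f_i`. -/
theorem s2m_main_theorem {X : Type*} [MeasurableSpace X] {ι : Type*} [Fintype ι] [DecidableEq ι]
    (f : Finset ι → Finset ι → X → ℝ)
    (hf_nonneg : ∀ I J x, 0 ≤ f I J x)
    (hf_meas : ∀ I J, Measurable (f I J)) :
    ((∀ I J : Finset ι, I.Nonempty → Disjoint I J → ∀ x,
        f I J x = ∑ S ∈ univ.powerset.filter (fun S => I ⊆ S ∧ J ⊆ Sᶜ), f S Sᶜ x) ∧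
     (∀ i j : ι, i ≠ j →
        Function.support (f {i} {j}) ∩ Function.support (f {j} {i}) = ∅))
    ↔
    (∀ I J : Finset ι, ∀ hI : I.Nonempty, Disjoint I J → ∀ x,
        f I J x =
          if hJ : J.Nonempty then
            max (I.inf' hI (fun i => f {i} ∅ x) - J.sup' hJ (fun j => f {j} ∅ x)) 0
          else
            I.inf' hI (fun i => f {i} ∅ x)) := by
  constructor
  · rintro ⟨ha, hb⟩
    intro I J hI hd x
    exact s2m_formula hf_nonneg ha (s2m_min hf_nonneg ha hb) J I hI hd x
  · intro h
    constructor
    · intro I J hI hd x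
      exact s2m_back_a (fun {I J} hI hd {j} hjI hjJ x => s2m_fsplit h hI hd hjI hjJ x)
        ((I ∪ J)ᶜ).card I J rfl hI hd x
    · intro i j hij
      rw [Set.eq_empty_iff_forall_notMem]
      rintro x ⟨h1, h2⟩
      rw [Function.mem_support] at h1 h2
      rw [h {i} {j} (Finset.singleton_nonempty i) (Finset.disjoint_singleton.mpr hij) x,
        dif_pos (Finset.singleton_nonempty j)] at h1
      rw [h {j} {i} (Finset.singleton_nonempty j) (Finset.disjoint_singleton.mpr hij.symm) x,
        dif_pos (Finset.singleton_nonempty i)] at h2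
      simp only [Finset.inf'_singleton, Finset.sup'_singleton] at h1 h2
      rcases le_total (f {i} ∅ x) (f {j} ∅ x) with hle | hle
      · exact h1 (max_eq_right (by linarith))
      · exact h2 (max_eq_right (by linarith))
end

section
/- Suppose conditions (a) and (b) hold for the family {f_{(I,J)}}. Then for every (I,J) ∈ 𝓘 with J ≠ ∅ and every x ∈ X, f_{(I,J)}(x) = (min_{i∈I} f_i(x) − max_{j∈J} f_j(x))⁺. -/
open Finset

/-- Necessity direction of the main theorem, case `J ≠ ∅`: under conditions (a) and (b),
`f_{(I,J)}(x) = (min_{i∈I} f_i(x) − max_{j∈J} f_j(x))⁺` for every `(I,J) ∈ 𝓘` with `J ≠ ∅`. -/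
theorem s2m_necessity_nonempty_diff {X : Type*} [MeasurableSpace X]
    {ι : Type*} [Fintype ι] [DecidableEq ι]
    (f : Finset ι → Finset ι → X → ℝ)
    (hf_nonneg : ∀ I J x, 0 ≤ f I J x)
    (hf_meas : ∀ I J, Measurable (f I J))
    (ha : ∀ I J : Finset ι, I.Nonempty → Disjoint I J → ∀ x,
        f I J x = ∑ S ∈ univ.powerset.filter (fun S => I ⊆ S ∧ J ⊆ Sᶜ), f S Sᶜ x)
    (hb : ∀ i j : ι, i ≠ j →
        Function.support (f {i} {j}) ∩ Function.support (f {j} {i}) = ∅) :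
    ∀ I J : Finset ι, ∀ hI : I.Nonempty, ∀ hJ : J.Nonempty, Disjoint I J → ∀ x,
      f I J x =
        max (I.inf' hI (fun i => f {i} ∅ x) - J.sup' hJ (fun j => f {j} ∅ x)) 0 := by
  classical
  intro I J hI hJ hIJ x
  set g : Finset ι → ℝ := fun S => f S Sᶜ x with hg
  have hg0 : ∀ S, 0 ≤ g S := fun S => hf_nonneg _ _ _
  set P : Finset (Finset ι) := univ.filter (fun S => 0 < g S) with hP
  set U : ι → Finset (Finset ι) := fun i => P.filter (fun S => i ∈ S) with hU
  have hmemU : ∀ i S, S ∈ U i ↔ (0 < g S ∧ i ∈ S) := by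
    intro i S; simp [hU, hP]
  -- f_i(x) equals the sum of g over U i
  have hF : ∀ i, f {i} ∅ x = ∑ S ∈ U i, g S := by
    intro i
    rw [ha {i} ∅ (singleton_nonempty i) (disjoint_empty_right _) x]
    symm
    apply Finset.sum_subset
    · intro S hS
      obtain ⟨hSg, hiS⟩ := (hmemU i S).mp hS
      simp [hiS]
    · intro S hS hS'
      simp only [mem_filter, mem_powerset, singleton_subset_iff] at hS
      by_contra hne
      exact hS' ((hmemU i S).mpr ⟨lt_of_le_of_ne (hg0 S) (Ne.symm hne), hS.2.1⟩)
  -- chain property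
  have hchain : ∀ S T, 0 < g S → 0 < g T → S ⊆ T ∨ T ⊆ S := by
    intro S T hS hT
    by_contra hc
    push_neg at hc
    obtain ⟨hST, hTS⟩ := hc
    obtain ⟨i, hiS, hiT⟩ := not_subset.mp hST
    obtain ⟨j, hjT, hjS⟩ := not_subset.mp hTS
    have hij : i ≠ j := fun h => hjS (h ▸ hiS)
    have h1 : 0 < f {i} {j} x := by
      rw [ha {i} {j} (singleton_nonempty i) (Finset.disjoint_singleton.mpr hij) x]
      have hmem : S ∈ univ.powerset.filter (fun S' => {i} ⊆ S' ∧ {j} ⊆ S'ᶜ) := by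
        simp [hiS, hjS]
      exact lt_of_lt_of_le hS
        (Finset.single_le_sum (f := fun S' => f S' S'ᶜ x) (fun T' _ => hf_nonneg _ _ _) hmem)
    have h2 : 0 < f {j} {i} x := by
      rw [ha {j} {i} (singleton_nonempty j) (Finset.disjoint_singleton.mpr hij.symm) x]
      have hmem : T ∈ univ.powerset.filter (fun S' => {j} ⊆ S' ∧ {i} ⊆ S'ᶜ) := by
        simp [hjT, hiT]
      exact lt_of_lt_of_le hT
        (Finset.single_le_sum (f := fun S' => f S' S'ᶜ x) (fun T' _ => hf_nonneg _ _ _) hmem)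
    have hmemb : x ∈ Function.support (f {i} {j}) ∩ Function.support (f {j} {i}) :=
      ⟨h1.ne', h2.ne'⟩
    rw [hb i j hij] at hmemb
    exact hmemb
  -- the up-sets U k are nested
  have hnest : ∀ k l, U k ⊆ U l ∨ U l ⊆ U k := by
    intro k l
    by_contra hc
    push_neg at hc
    obtain ⟨h1, h2⟩ := hc
    obtain ⟨S, hSk, hSl⟩ := not_subset.mp h1
    obtain ⟨T, hTl, hTk⟩ := not_subset.mp h2
    obtain ⟨hSg, hkS⟩ := (hmemU k S).mp hSk
    obtain ⟨hTg, hlT⟩ := (hmemU l T).mp hTl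
    rcases hchain S T hSg hTg with h | h
    · exact hTk ((hmemU k T).mpr ⟨hTg, h hkS⟩)
    · exact hSl ((hmemU l S).mpr ⟨hSg, h hlT⟩)
  -- extremal indices
  obtain ⟨i₀, hi₀I, hi₀min⟩ := I.exists_min_image (fun i => (U i).card) hI
  have hmin : ∀ i ∈ I, U i₀ ⊆ U i := by
    intro i hi
    rcases hnest i₀ i with h | h
    · exact h
    · have he := Finset.eq_of_subset_of_card_le h (hi₀min i hi)
      rw [he]
  obtain ⟨j₀, hj₀J, hj₀max⟩ := J.exists_max_image (fun j => (U j).card) hJ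
  have hmax : ∀ j ∈ J, U j ⊆ U j₀ := by
    intro j hj
    rcases hnest j j₀ with h | h
    · exact h
    · have he := Finset.eq_of_subset_of_card_le h (hj₀max j hj)
      rw [← he]
  -- inf and sup values
  have hinf : I.inf' hI (fun i => f {i} ∅ x) = ∑ S ∈ U i₀, g S := by
    apply le_antisymm
    · exact (inf'_le (fun i => f {i} ∅ x) hi₀I).trans_eq (hF i₀)
    · apply le_inf'
      intro i hi
      rw [hF i]
      exact Finset.sum_le_sum_of_subset_of_nonneg (hmin i hi) (fun S _ _ => hg0 S)
  have hsup : J.sup' hJ (fun j => f {j} ∅ x) = ∑ S ∈ U j₀, g S := by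
    apply le_antisymm
    · apply sup'_le
      intro j hj
      rw [hF j]
      exact Finset.sum_le_sum_of_subset_of_nonneg (hmax j hj) (fun S _ _ => hg0 S)
    · exact (hF j₀).ge.trans (le_sup' (fun j => f {j} ∅ x) hj₀J)
  -- f I J x as a sum over the difference
  have hfIJ : f I J x = ∑ S ∈ U i₀ \ U j₀, g S := by
    rw [ha I J hI hIJ x]
    symm
    apply Finset.sum_subset
    · intro S hS
      obtain ⟨hS1, hS2⟩ := Finset.mem_sdiff.mp hS
      obtain ⟨hSg, _⟩ := (hmemU i₀ S).mp hS1
      simp only [mem_filter, mem_powerset]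
      refine ⟨subset_univ S, ?_, ?_⟩
      · intro i hi
        exact ((hmemU i S).mp (hmin i hi hS1)).2
      · intro j hj
        rw [mem_compl]
        intro hjS
        exact hS2 (hmax j (by simpa using hj) ((hmemU j S).mpr ⟨hSg, hjS⟩))
    · intro S hS hS'
      simp only [mem_filter, mem_powerset] at hS
      obtain ⟨_, hIS, hJS⟩ := hS
      by_contra hne
      have hSg : 0 < g S := lt_of_le_of_ne (hg0 S) (Ne.symm hne)
      apply hS'
      rw [Finset.mem_sdiff]
      refine ⟨(hmemU i₀ S).mpr ⟨hSg, hIS hi₀I⟩, ?_⟩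
      intro hSj
      exact (mem_compl.mp (hJS hj₀J)) ((hmemU j₀ S).mp hSj).2
  rw [hfIJ, hinf, hsup]
  rcases hnest i₀ j₀ with h | h
  · rw [Finset.sdiff_eq_empty_iff_subset.mpr h, Finset.sum_empty]
    symm
    rw [max_eq_right]
    exact sub_nonpos.mpr (Finset.sum_le_sum_of_subset_of_nonneg h (fun S _ _ => hg0 S))
  · rw [Finset.sum_sdiff_eq_sub h]
    symm
    apply max_eq_left
    rw [← Finset.sum_sdiff_eq_sub h]
    exact Finset.sum_nonneg (fun S _ => hg0 S)
end

section
/- Suppose that for every (I,J) ∈ 𝓘 the function f_{(I,J)} equals (min_{i∈I} f_i − max_{j∈J} f_j)⁺ pointwise when J ≠ ∅ and equals min_{i∈I} f_i pointwise when J = ∅. Then condition (a) holds (for every (I,J) ∈ 𝓘, f_{(I,J)} = Σ_{S : I ⊆ S ⊆ N, J ⊆ N∖S} f_{(S,N∖S)}), and condition (b) holds (for all distinct i, j ∈ N, supp f_{({i},{j})} ∩ supp f_{({j},{i})} = ∅). -/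
open Finset

private lemma real_split (a b c : ℝ) :
    max (a - b) 0 = max (min c a - b) 0 + max (a - max c b) 0 := by
  simp only [max_def, min_def]
  split_ifs <;> linarith

private lemma real_split0 (a c : ℝ) :
    a = min c a + max (a - c) 0 := by
  simp only [max_def, min_def]
  split_ifs <;> linarith

/-- Sufficiency direction of the main theorem: if for every `(I,J) ∈ 𝓘` the function
`f_{(I,J)}` equals `(min_{i∈I} f_i − max_{j∈J} f_j)⁺` when `J ≠ ∅` and `min_{i∈I} f_i`
when `J = ∅`, then conditions (a) and (b) hold. -/
theorem s2m_sufficiency {X : Type*} [MeasurableSpace X]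
    {ι : Type*} [Fintype ι] [DecidableEq ι]
    (f : Finset ι → Finset ι → X → ℝ)
    (hf_nonneg : ∀ I J x, 0 ≤ f I J x)
    (hf_meas : ∀ I J, Measurable (f I J))
    (hform : ∀ I J : Finset ι, ∀ hI : I.Nonempty, Disjoint I J → ∀ x,
        f I J x =
          if hJ : J.Nonempty then
            max (I.inf' hI (fun i => f {i} ∅ x) - J.sup' hJ (fun j => f {j} ∅ x)) 0
          else
            I.inf' hI (fun i => f {i} ∅ x)) :
    (∀ I J : Finset ι, I.Nonempty → Disjoint I J → ∀ x,
        f I J x = ∑ S ∈ univ.powerset.filter (fun S => I ⊆ S ∧ J ⊆ Sᶜ), f S Sᶜ x) ∧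
    (∀ i j : ι, i ≠ j →
        Function.support (f {i} {j}) ∩ Function.support (f {j} {i}) = ∅) := by
  constructor
  · suffices H : ∀ n (I J : Finset ι), ((I ∪ J)ᶜ).card = n → I.Nonempty → Disjoint I J →
        ∀ x, f I J x = ∑ S ∈ univ.powerset.filter (fun S => I ⊆ S ∧ J ⊆ Sᶜ), f S Sᶜ x by
      exact fun I J hI hIJ x => H _ I J rfl hI hIJ x
    intro n
    induction n with
    | zero =>
      intro I J hcard hI hIJ x
      have hempty : (I ∪ J)ᶜ = ∅ := Finset.card_eq_zero.mp hcard
      have hunion : I ∪ J = univ := by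
        rwa [Finset.compl_eq_empty_iff] at hempty
      have hJ : J = Iᶜ := by
        ext a
        simp only [mem_compl]
        constructor
        · intro ha hai; exact (Finset.disjoint_left.mp hIJ hai) ha
        · intro ha
          have : a ∈ I ∪ J := hunion ▸ mem_univ a
          rcases mem_union.mp this with h | h
          · exact absurd h ha
          · exact h
      have hfilter : univ.powerset.filter (fun S => I ⊆ S ∧ J ⊆ Sᶜ) = {I} := by
        ext S
        simp only [mem_filter, mem_powerset, mem_singleton, subset_univ, true_and]
        constructor
        · rintro ⟨h1, h2⟩
          refine Finset.Subset.antisymm ?_ h1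
          rw [hJ] at h2
          exact Finset.compl_subset_compl.mp h2
        · rintro rfl
          exact ⟨Finset.Subset.refl _, hJ ▸ Finset.Subset.refl _⟩
      rw [hfilter, Finset.sum_singleton, ← hJ]
    | succ n ih =>
      intro I J hcard hI hIJ x
      have hne : ((I ∪ J)ᶜ).Nonempty := card_pos.mp (hcard ▸ n.succ_pos)
      obtain ⟨k, hk⟩ := hne
      have hkI : k ∉ I := fun h => (mem_compl.mp hk) (mem_union_left _ h)
      have hkJ : k ∉ J := fun h => (mem_compl.mp hk) (mem_union_right _ h)
      rw [← Finset.sum_filter_add_sum_filter_not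
        (univ.powerset.filter (fun S => I ⊆ S ∧ J ⊆ Sᶜ)) (fun S => k ∈ S)]
      have e1 : (univ.powerset.filter (fun S => I ⊆ S ∧ J ⊆ Sᶜ)).filter (fun S => k ∈ S)
          = univ.powerset.filter (fun S => insert k I ⊆ S ∧ J ⊆ Sᶜ) := by
        ext S
        simp only [mem_filter, mem_powerset, insert_subset_iff, subset_univ, true_and]
        tauto
      have e2 : (univ.powerset.filter (fun S => I ⊆ S ∧ J ⊆ Sᶜ)).filter (fun S => ¬ k ∈ S)
          = univ.powerset.filter (fun S => I ⊆ S ∧ insert k J ⊆ Sᶜ) := by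
        ext S
        simp only [mem_filter, mem_powerset, insert_subset_iff, subset_univ, true_and,
          mem_compl]
        tauto
      rw [e1, e2]
      have hc1 : (((insert k I) ∪ J)ᶜ).card = n := by
        rw [insert_union, compl_insert, card_erase_of_mem hk, hcard]
        omega
      have hc2 : ((I ∪ (insert k J))ᶜ).card = n := by
        rw [union_insert, compl_insert, card_erase_of_mem hk, hcard]
        omega
      have hd1 : Disjoint (insert k I) J := by
        rw [disjoint_insert_left]; exact ⟨hkJ, hIJ⟩
      have hd2 : Disjoint I (insert k J) := by
        rw [disjoint_insert_right]; exact ⟨hkI, hIJ⟩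
      rw [← ih (insert k I) J hc1 (insert_nonempty _ _) hd1 x,
        ← ih I (insert k J) hc2 hI hd2 x]
      rw [hform I J hI hIJ x, hform (insert k I) J (insert_nonempty _ _) hd1 x,
        hform I (insert k J) hI hd2 x]
      by_cases hJne : J.Nonempty
      · rw [dif_pos hJne, dif_pos hJne, dif_pos (insert_nonempty k J)]
        rw [Finset.inf'_insert (H := hI), Finset.sup'_insert (H := hJne)]
        exact real_split _ _ _
      · rw [Finset.not_nonempty_iff_eq_empty] at hJne
        subst hJne
        rw [dif_neg (by simp), dif_neg (by simp), dif_pos (insert_nonempty k ∅)]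
        rw [Finset.inf'_insert (H := hI)]
        simp only [insert_empty_eq, Finset.sup'_singleton]
        exact real_split0 _ _
  · intro i j hij
    ext x
    simp only [Set.mem_inter_iff, Function.mem_support, Set.mem_empty_iff_false, iff_false,
      not_and]
    intro h1 h2
    have e1 := hform {i} {j} (singleton_nonempty i)
      (Finset.disjoint_singleton.mpr hij) x
    have e2 := hform {j} {i} (singleton_nonempty j)
      (Finset.disjoint_singleton.mpr hij.symm) x
    simp only [dif_pos (singleton_nonempty _), Finset.inf'_singleton,
      Finset.sup'_singleton] at e1 e2
    rw [e1] at h1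
    rw [e2] at h2
    have p1 : 0 < f {i} ∅ x - f {j} ∅ x := by
      by_contra h; push_neg at h
      exact h1 (max_eq_right h)
    have p2 : 0 < f {j} ∅ x - f {i} ∅ x := by
      by_contra h; push_neg at h
      exact h2 (max_eq_right h)
    linarith
end

section
/- Suppose conditions (a) and (b) hold for the family {f_{(I,J)}}. Then for all (I₁,J₁), (I₂,J₂) ∈ 𝓘 such that I₁ ∩ J₂ ≠ ∅ and J₁ ∩ I₂ ≠ ∅, one has supp f_{(I₁,J₁)} ∩ supp f_{(I₂,J₂)} = ∅. -/
open Finset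

/-- Lemma 1 of the paper: under conditions (a) and (b), for all `(I₁,J₁), (I₂,J₂) ∈ 𝓘` with
`I₁ ∩ J₂ ≠ ∅` and `J₁ ∩ I₂ ≠ ∅`, the supports of `f_{(I₁,J₁)}` and `f_{(I₂,J₂)}` are disjoint. -/
theorem s2m_disjoint_supports {X : Type*} [MeasurableSpace X]
    {ι : Type*} [Fintype ι] [DecidableEq ι]
    (f : Finset ι → Finset ι → X → ℝ)
    (hf_nonneg : ∀ I J x, 0 ≤ f I J x)
    (hf_meas : ∀ I J, Measurable (f I J))
    (ha : ∀ I J : Finset ι, I.Nonempty → Disjoint I J → ∀ x,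
        f I J x = ∑ S ∈ univ.powerset.filter (fun S => I ⊆ S ∧ J ⊆ Sᶜ), f S Sᶜ x)
    (hb : ∀ i j : ι, i ≠ j →
        Function.support (f {i} {j}) ∩ Function.support (f {j} {i}) = ∅) :
    ∀ I₁ J₁ I₂ J₂ : Finset ι,
      I₁.Nonempty → Disjoint I₁ J₁ → I₂.Nonempty → Disjoint I₂ J₂ →
      (I₁ ∩ J₂).Nonempty → (J₁ ∩ I₂).Nonempty →
      Function.support (f I₁ J₁) ∩ Function.support (f I₂ J₂) = ∅ := by
  intro I₁ J₁ I₂ J₂ hI₁ hD₁ hI₂ hD₂ hIJ hJI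
  ext x
  simp only [Set.mem_inter_iff, Function.mem_support, Set.mem_empty_iff_false, iff_false]
  rintro ⟨h1, h2⟩
  obtain ⟨i, hi⟩ := hIJ
  obtain ⟨j, hj⟩ := hJI
  rw [mem_inter] at hi hj
  have hij : i ≠ j := fun h => (disjoint_left.1 hD₂) hj.2 (h ▸ hi.2)
  -- get S from h1
  rw [ha I₁ J₁ hI₁ hD₁ x] at h1
  obtain ⟨S, hSmem, hS⟩ := Finset.exists_ne_zero_of_sum_ne_zero h1
  rw [ha I₂ J₂ hI₂ hD₂ x] at h2
  obtain ⟨T, hTmem, hT⟩ := Finset.exists_ne_zero_of_sum_ne_zero h2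
  simp only [mem_filter, mem_powerset] at hSmem hTmem
  have hiS : i ∈ S := hSmem.2.1 hi.1
  have hjS : j ∈ Sᶜ := hSmem.2.2 hj.1
  have hjT : j ∈ T := hTmem.2.1 hj.2
  have hiT : i ∈ Tᶜ := hTmem.2.2 hi.2
  have key : ∀ (a b : ι) (U : Finset ι), a ≠ b → a ∈ U → b ∈ Uᶜ →
      f U Uᶜ x ≠ 0 → f {a} {b} x ≠ 0 := by
    intro a b U hab haU hbU hU
    rw [ha {a} {b} (singleton_nonempty a) (by simpa using hab) x]
    have hUmem : U ∈ univ.powerset.filter (fun S => ({a} : Finset ι) ⊆ S ∧ ({b} : Finset ι) ⊆ Sᶜ) := by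
      simp only [mem_filter, mem_powerset, singleton_subset_iff]; exact ⟨subset_univ U, haU, hbU⟩
    have hpos : 0 < f U Uᶜ x := lt_of_le_of_ne (hf_nonneg _ _ _) (Ne.symm hU)
    have : 0 < ∑ S ∈ univ.powerset.filter (fun S => ({a} : Finset ι) ⊆ S ∧ ({b} : Finset ι) ⊆ Sᶜ), f S Sᶜ x :=
      lt_of_lt_of_le hpos (Finset.single_le_sum (f := fun S => f S Sᶜ x) (fun S _ => hf_nonneg _ _ x) hUmem)
    exact ne_of_gt this
  have h3 := key i j S hij hiS hjS hS
  have h4 := key j i T hij.symm hjT hiT hT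
  have := hb i j hij
  have : x ∈ Function.support (f {i} {j}) ∩ Function.support (f {j} {i}) := ⟨h3, h4⟩
  rw [hb i j hij] at this
  exact this
end

section
/- Suppose conditions (a) and (b) hold for the family {f_{(I,J)}}. Then for every i ∈ N and every I ⊆ N with {i} strictly contained in I, one has supp f_{(I∖{i},{i})} ∩ supp (Σ_{S : i ∈ S ⊆ N, I ⊄ S} f_{(S,N∖S)}) = ∅. -/
open Finset

/-- Lemma 2 of the paper: under conditions (a) and (b), for every `i ∈ N` and `I ⊆ N` with
`{i} ⊊ I`, the support of `f_{(I∖{i},{i})}` is disjoint from the support of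
`Σ_{S : i ∈ S ⊆ N, I ⊄ S} f_{(S, N∖S)}`. -/
theorem s2m_disjoint_sum {X : Type*} [MeasurableSpace X]
    {ι : Type*} [Fintype ι] [DecidableEq ι]
    (f : Finset ι → Finset ι → X → ℝ)
    (hf_nonneg : ∀ I J x, 0 ≤ f I J x)
    (hf_meas : ∀ I J, Measurable (f I J))
    (ha : ∀ I J : Finset ι, I.Nonempty → Disjoint I J → ∀ x,
        f I J x = ∑ S ∈ univ.powerset.filter (fun S => I ⊆ S ∧ J ⊆ Sᶜ), f S Sᶜ x)
    (hb : ∀ i j : ι, i ≠ j →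
        Function.support (f {i} {j}) ∩ Function.support (f {j} {i}) = ∅) :
    ∀ (i : ι) (I : Finset ι), {i} ⊂ I →
      Function.support (f (I \ {i}) {i}) ∩
        Function.support (fun x =>
          ∑ S ∈ univ.powerset.filter (fun S => i ∈ S ∧ ¬ I ⊆ S), f S Sᶜ x) = ∅ := by
  intro i I hI
  ext x
  simp only [Set.mem_inter_iff, Function.mem_support, Set.mem_empty_iff_false, iff_false]
  rintro ⟨h1, h2⟩
  -- extract a nonzero term from the sum
  obtain ⟨S, hS, hSne⟩ := Finset.exists_ne_zero_of_sum_ne_zero h2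
  simp only [Finset.mem_filter, Finset.mem_powerset] at hS
  obtain ⟨-, hiS, hIS⟩ := hS
  obtain ⟨j, hjI, hjS⟩ := Finset.not_subset.mp hIS
  have hij : j ≠ i := fun h => hjS (h ▸ hiS)
  have hj' : j ∈ I \ {i} := Finset.mem_sdiff.mpr ⟨hjI, by simpa using hij⟩
  -- f {i} {j} x > 0
  have hfij : f {i} {j} x ≠ 0 := by
    have heq := ha {i} {j} (Finset.singleton_nonempty i)
      (by simp only [Finset.disjoint_singleton]; exact hij.symm) x
    have hmem : S ∈ univ.powerset.filter (fun S => {i} ⊆ S ∧ {j} ⊆ Sᶜ) := by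
      simp [Finset.singleton_subset_iff, hiS, hjS]
    have hle : f S Sᶜ x ≤ ∑ T ∈ univ.powerset.filter (fun T => {i} ⊆ T ∧ {j} ⊆ Tᶜ),
        f T Tᶜ x := Finset.single_le_sum (fun T _ => hf_nonneg T Tᶜ x) hmem
    have hpos : 0 < f S Sᶜ x := lt_of_le_of_ne (hf_nonneg _ _ _) (Ne.symm hSne)
    rw [heq]
    exact ne_of_gt (lt_of_lt_of_le hpos hle)
  -- f {j} {i} x > 0
  have hfji : f {j} {i} x ≠ 0 := by
    have heq1 := ha (I \ {i}) {i} ⟨j, hj'⟩ (by simp) x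
    have heq2 := ha {j} {i} (Finset.singleton_nonempty j)
      (by simp only [Finset.disjoint_singleton]; exact hij) x
    have hsub : univ.powerset.filter (fun T => I \ {i} ⊆ T ∧ {i} ⊆ Tᶜ) ⊆
        univ.powerset.filter (fun T => {j} ⊆ T ∧ {i} ⊆ Tᶜ) := by
      intro T hT
      simp only [Finset.mem_filter, Finset.mem_powerset, Finset.singleton_subset_iff] at *
      exact ⟨hT.1, hT.2.1 hj', hT.2.2⟩
    have hle : ∑ T ∈ univ.powerset.filter (fun T => I \ {i} ⊆ T ∧ {i} ⊆ Tᶜ), f T Tᶜ x ≤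
        ∑ T ∈ univ.powerset.filter (fun T => {j} ⊆ T ∧ {i} ⊆ Tᶜ), f T Tᶜ x :=
      Finset.sum_le_sum_of_subset_of_nonneg hsub (fun T _ _ => hf_nonneg T Tᶜ x)
    have hpos : 0 < f (I \ {i}) {i} x := lt_of_le_of_ne (hf_nonneg _ _ _) (Ne.symm h1)
    rw [heq2]
    exact ne_of_gt (lt_of_lt_of_le (heq1 ▸ hpos) hle)
  have := hb i j hij.symm
  have hx : x ∈ Function.support (f {i} {j}) ∩ Function.support (f {j} {i}) := ⟨hfij, hfji⟩
  rw [this] at hx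
  exact hx
end

section
/- Suppose conditions (a) and (b) hold for the family {f_{(I,J)}}. Then for every nonempty I ⊆ N and every x ∈ X, f_{(I,∅)}(x) = min_{i∈I} f_i(x). -/
open Finset

/-- Lemma 3 of the paper: under conditions (a) and (b), for every nonempty `I ⊆ N`,
`f_{(I,∅)} = min_{i∈I} f_i` pointwise. -/
theorem s2m_min_formula {X : Type*} [MeasurableSpace X]
    {ι : Type*} [Fintype ι] [DecidableEq ι]
    (f : Finset ι → Finset ι → X → ℝ)
    (hf_nonneg : ∀ I J x, 0 ≤ f I J x)
    (hf_meas : ∀ I J, Measurable (f I J))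
    (ha : ∀ I J : Finset ι, I.Nonempty → Disjoint I J → ∀ x,
        f I J x = ∑ S ∈ univ.powerset.filter (fun S => I ⊆ S ∧ J ⊆ Sᶜ), f S Sᶜ x)
    (hb : ∀ i j : ι, i ≠ j →
        Function.support (f {i} {j}) ∩ Function.support (f {j} {i}) = ∅) :
    ∀ (I : Finset ι) (hI : I.Nonempty) (x : X),
      f I ∅ x = I.inf' hI (fun i => f {i} ∅ x) := by
  intro I hI x
  classical
  set g : Finset ι → ℝ := fun S => f S Sᶜ x with hg
  have hg0 : ∀ S, 0 ≤ g S := fun S => hf_nonneg _ _ _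
  have hpos : ∀ S, g S ≠ 0 → 0 < g S := fun S h => (hg0 S).lt_of_ne (Ne.symm h)
  -- sum formula with only nonzero terms
  have hsum : ∀ (K : Finset ι), K.Nonempty →
      f K ∅ x = ∑ S ∈ univ.filter (fun S => K ⊆ S ∧ g S ≠ 0), g S := by
    intro K hK
    rw [ha K ∅ hK (disjoint_empty_right K) x, powerset_univ,
      ← Finset.sum_filter_ne_zero (univ.filter (fun S => K ⊆ S ∧ ∅ ⊆ Sᶜ)),
      filter_filter]
    apply Finset.sum_congr _ (fun _ _ => rfl)
    apply filter_congr
    intro S _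
    simp [hg]
  -- the supports form a chain
  have hchain : ∀ S T : Finset ι, g S ≠ 0 → g T ≠ 0 → S ⊆ T ∨ T ⊆ S := by
    intro S T hS hT
    by_contra h
    push_neg at h
    obtain ⟨hST, hTS⟩ := h
    obtain ⟨i, hiS, hiT⟩ := not_subset.mp hST
    obtain ⟨j, hjT, hjS⟩ := not_subset.mp hTS
    have hij : i ≠ j := fun h => hjS (h ▸ hiS)
    have h1 : 0 < f ({i} : Finset ι) ({j} : Finset ι) x := by
      rw [ha {i} {j} (singleton_nonempty i) (by simp [hij, hij.symm]) x]
      refine lt_of_lt_of_le (hpos S hS) ?_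
      refine Finset.single_le_sum (fun S' _ => hg0 S') ?_
      simp [hiS, hjS, hij.symm]
    have h2 : 0 < f ({j} : Finset ι) ({i} : Finset ι) x := by
      rw [ha {j} {i} (singleton_nonempty j) (by simp [hij, hij.symm]) x]
      refine lt_of_lt_of_le (hpos T hT) ?_
      refine Finset.single_le_sum (fun S' _ => hg0 S') ?_
      simp [hjT, hiT, hij]
    have hx : x ∈ Function.support (f {i} {j}) ∩ Function.support (f {j} {i}) :=
      ⟨h1.ne', h2.ne'⟩
    rw [hb i j hij] at hx
    exact hx
  -- the up-sets
  set A : ι → Finset (Finset ι) :=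
    fun i => univ.filter (fun S => ({i} : Finset ι) ⊆ S ∧ g S ≠ 0) with hA
  have hmemA : ∀ i S, S ∈ A i ↔ (i ∈ S ∧ g S ≠ 0) := by
    intro i S; simp [hA]
  have hAcomp : ∀ i j, A i ⊆ A j ∨ A j ⊆ A i := by
    intro i j
    by_contra h
    push_neg at h
    obtain ⟨hij, hji⟩ := h
    obtain ⟨S, hSi, hSj⟩ := not_subset.mp hij
    obtain ⟨T, hTj, hTi⟩ := not_subset.mp hji
    rw [hmemA] at hSi hTj
    have hjS : j ∉ S := fun hj => hSj ((hmemA j S).mpr ⟨hj, hSi.2⟩)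
    have hiT : i ∉ T := fun hi => hTi ((hmemA i T).mpr ⟨hi, hTj.2⟩)
    rcases hchain S T hSi.2 hTj.2 with h | h
    · exact hiT (h hSi.1)
    · exact hjS (h hTj.1)
  -- argmin
  obtain ⟨i0, hi0I, hmin⟩ := I.exists_min_image (fun i => f {i} ∅ x) hI
  have hfA : ∀ i, f ({i} : Finset ι) ∅ x = ∑ S ∈ A i, g S := by
    intro i
    rw [hsum {i} (singleton_nonempty i)]
  have hup : ∀ i ∈ I, A i0 ⊆ A i := by
    intro i hiI
    rcases hAcomp i0 i with h | h
    · exact h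
    · by_contra hc
      obtain ⟨S, hS0, hSi⟩ := not_subset.mp hc
      have hlt : (∑ S' ∈ A i, g S') < ∑ S' ∈ A i0, g S' := by
        refine Finset.sum_lt_sum_of_subset h hS0 hSi (hpos S ((hmemA i0 S).mp hS0).2)
          (fun j _ _ => hg0 j)
      rw [← hfA, ← hfA] at hlt
      exact absurd (hmin i hiI) (not_le.mpr hlt)
  have hB : univ.filter (fun S => I ⊆ S ∧ g S ≠ 0) = A i0 := by
    ext S
    simp only [mem_filter, mem_univ, true_and, hmemA]
    constructor
    · rintro ⟨hIS, hgS⟩; exact ⟨hIS hi0I, hgS⟩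
    · rintro ⟨hi0S, hgS⟩
      refine ⟨fun i hiI => ?_, hgS⟩
      have := hup i hiI ((hmemA i0 S).mpr ⟨hi0S, hgS⟩)
      exact ((hmemA i S).mp this).1
  have hmain : f I ∅ x = f ({i0} : Finset ι) ∅ x := by
    rw [hsum I hI, hB, hfA]
  rw [hmain]
  exact le_antisymm (le_inf' hI _ fun i hi => hmin i hi) (inf'_le _ hi0I)
end

section
/- Let I and J be finite, nonempty, disjoint sets and let f : I ∪ J → ℝ be any function. Then the alternating sum over subsets of J of the minimum of f over I ∪ S satisfies Σ_{S ⊆ J} (−1)^{|S|} min_{i ∈ I∪S} f(i) = (min_{i∈I} f(i) − max_{j∈J} f(j))⁺, where for S = ∅ the term is min_{i∈I} f(i). -/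
open Finset

private lemma inf'_inf_const {ι : Type*} (s : Finset ι) (hs : s.Nonempty) (f : ι → ℝ) (c : ℝ) :
    s.inf' hs (fun i => f i ⊓ c) = s.inf' hs f ⊓ c :=
  (Finset.apply_inf'_eq_inf'_comp hs (· ⊓ c)
    (fun x y => by simp [inf_assoc, inf_comm, inf_left_comm])).symm

private lemma sup'_inf_const {ι : Type*} (s : Finset ι) (hs : s.Nonempty) (f : ι → ℝ) (c : ℝ) :
    s.sup' hs (fun i => f i ⊓ c) = s.sup' hs f ⊓ c :=
  (Finset.apply_sup'_eq_sup'_comp hs (· ⊓ c)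
    (fun x y => by beta_reduce; rw [inf_sup_right])).symm

private lemma real_key (A B C : ℝ) :
    max (A - B) 0 - max (A ⊓ C - B ⊓ C) 0 = max (A - (C ⊔ B)) 0 := by
  rcases le_total A C with h1 | h1 <;> rcases le_total B C with h2 | h2 <;>
    rcases le_total A B with h3 | h3 <;>
    simp [min_def, max_def] <;> split_ifs <;> linarith

private lemma alt_aux {ι : Type*} [DecidableEq ι]
    (I : Finset ι) (hI : I.Nonempty) (J : Finset ι) :
    ∀ f : ι → ℝ,
    ∑ S ∈ J.powerset, (-1 : ℝ) ^ S.card * (I ∪ S).inf' (hI.mono subset_union_left) f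
      = if h : J.Nonempty then max (I.inf' hI f - J.sup' h f) 0 else I.inf' hI f := by
  induction J using Finset.induction_on with
  | empty => intro f; simp
  | @insert a J ha ih =>
    intro f
    rw [powerset_insert, Finset.sum_union, Finset.sum_image]
    · have hins : ∀ S ∈ J.powerset, (-1 : ℝ) ^ (insert a S).card *
          (I ∪ insert a S).inf' (hI.mono subset_union_left) f
          = -((-1 : ℝ) ^ S.card *
              (I ∪ S).inf' (hI.mono subset_union_left) (fun i => f i ⊓ f a)) := by
        intro S hS
        have haS : a ∉ S := fun h => ha (mem_powerset.mp hS h)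
        have h2 : (I ∪ insert a S).inf' (hI.mono subset_union_left) f
            = f a ⊓ (I ∪ S).inf' (hI.mono subset_union_left) f := by
          simp only [union_insert]
          rw [inf'_insert]
        rw [card_insert_of_notMem haS, h2, inf'_inf_const, pow_succ, inf_comm]
        ring
      rw [Finset.sum_congr rfl hins, Finset.sum_neg_distrib, ih, ih]
      by_cases hJ : J.Nonempty
      · rw [dif_pos hJ, dif_pos hJ, dif_pos (insert_nonempty a J),
          inf'_inf_const, sup'_inf_const, sup'_insert]
        exact real_key _ _ _
      · have hJ' : J = ∅ := not_nonempty_iff_eq_empty.mp hJ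
        subst hJ'
        rw [dif_neg hJ, dif_neg hJ, dif_pos (insert_nonempty a ∅),
          inf'_inf_const]
        simp only [show insert a (∅ : Finset ι) = {a} from rfl, sup'_singleton]
        rcases le_total (I.inf' hI f) (f a) with h | h <;>
          simp [min_def, max_def] <;> split_ifs <;> linarith
    · intro S hS T hT hST
      have haS : a ∉ S := fun h => ha (mem_powerset.mp hS h)
      have haT : a ∉ T := fun h => ha (mem_powerset.mp hT h)
      ext x
      constructor <;> intro hx
      · rcases mem_insert.mp (hST ▸ mem_insert_of_mem hx : x ∈ insert a T) with h | h
        · exact absurd (h ▸ hx) haS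
        · exact h
      · rcases mem_insert.mp (hST ▸ mem_insert_of_mem hx : x ∈ insert a S) with h | h
        · exact absurd (h ▸ hx) haT
        · exact h
    · rw [Finset.disjoint_left]
      rintro S hS hS'
      rcases mem_image.mp hS' with ⟨T, hT, rfl⟩
      exact ha (mem_powerset.mp hS (mem_insert_self a T))

/-- Alternating-sum identity: for finite, nonempty, disjoint sets `I`, `J` and any `f`,
`Σ_{S ⊆ J} (−1)^{|S|} min_{i∈I∪S} f(i) = (min_{i∈I} f(i) − max_{j∈J} f(j))⁺`. -/
theorem alternating_min_sum {ι : Type*} [DecidableEq ι]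
    (I J : Finset ι) (hI : I.Nonempty) (hJ : J.Nonempty) (hd : Disjoint I J)
    (f : ι → ℝ) :
    ∑ S ∈ J.powerset, (-1 : ℝ) ^ S.card * (I ∪ S).inf' (hI.mono subset_union_left) f
      = max (I.inf' hI f - J.sup' hJ f) 0 := by
  rw [alt_aux I hI J f, dif_pos hJ]
end

section
/- Let μ be a measure on X, let (I,J) ∈ 𝓘 with J ≠ ∅, and suppose the family {f_{(I,J)}} satisfies conditions (a) and (b). Let π_c > 0 for each c ∈ N, let g_c : X → [0,∞) be measurable functions with f_c = π_c · g_c pointwise, and set π_{(I,J)} := ∫_X f_{(I,J)} dμ. If π_{(I,J)} > 0, then the normalized density p_{(I,J)} := f_{(I,J)} / π_{(I,J)} satisfies, for every x ∈ X, p_{(I,J)}(x) = π_{(I,J)}^{−1} · (min_{i∈I} π_i g_i(x) − max_{j∈J} π_j g_j(x))⁺. -/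
open Finset MeasureTheory

/-- Equation (4) of the paper: under conditions (a) and (b), with `f_c = π_c · g_c` and
`π_{(I,J)} = ∫ f_{(I,J)} dμ > 0`, the normalized joint-class density satisfies
`p_{(I,J)}(x) = π_{(I,J)}⁻¹ (min_{i∈I} π_i g_i(x) − max_{j∈J} π_j g_j(x))⁺`. -/
theorem s2m_normalized_density {X : Type*} [MeasurableSpace X]
    {ι : Type*} [Fintype ι] [DecidableEq ι]
    (μ : Measure X)
    (f : Finset ι → Finset ι → X → ℝ)
    (hf_nonneg : ∀ I J x, 0 ≤ f I J x)
    (hf_meas : ∀ I J, Measurable (f I J))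
    (ha : ∀ I J : Finset ι, I.Nonempty → Disjoint I J → ∀ x,
        f I J x = ∑ S ∈ univ.powerset.filter (fun S => I ⊆ S ∧ J ⊆ Sᶜ), f S Sᶜ x)
    (hb : ∀ i j : ι, i ≠ j →
        Function.support (f {i} {j}) ∩ Function.support (f {j} {i}) = ∅)
    (I J : Finset ι) (hI : I.Nonempty) (hJ : J.Nonempty) (hd : Disjoint I J)
    (π : ι → ℝ) (hπ : ∀ c, 0 < π c)
    (g : ι → X → ℝ) (hg_nonneg : ∀ c x, 0 ≤ g c x) (hg_meas : ∀ c, Measurable (g c))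
    (hfg : ∀ c x, f {c} ∅ x = π c * g c x)
    (πIJ : ℝ) (hπIJ : πIJ = ∫ x, f I J x ∂μ) (hpos : 0 < πIJ)
    (p : X → ℝ) (hp : ∀ x, p x = f I J x / πIJ) :
    ∀ x : X, p x =
      πIJ⁻¹ * max (I.inf' hI (fun i => π i * g i x) - J.sup' hJ (fun j => π j * g j x)) 0 := by
  classical
  intro x
  set a : Finset ι → ℝ := fun S => f S Sᶜ x with ha_def
  have a_nonneg : ∀ S, 0 ≤ a S := fun S => hf_nonneg _ _ _
  -- condition (a) rewritten: sum over nonzero atoms only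
  have key : ∀ I' J' : Finset ι, I'.Nonempty → Disjoint I' J' →
      f I' J' x = ∑ S ∈ univ.filter (fun S => a S ≠ 0 ∧ I' ⊆ S ∧ Disjoint J' S), a S := by
    intro I' J' h1 h2
    rw [ha I' J' h1 h2 x]
    have hsub : univ.filter (fun S : Finset ι => a S ≠ 0 ∧ I' ⊆ S ∧ Disjoint J' S)
        ⊆ univ.powerset.filter (fun S => I' ⊆ S ∧ J' ⊆ Sᶜ) := by
      intro S hS
      simp only [Finset.mem_filter, Finset.mem_powerset, Finset.mem_univ, true_and] at hS ⊢
      refine ⟨Finset.subset_univ S, hS.2.1, ?_⟩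
      intro j hj
      simp only [Finset.mem_compl]
      exact Finset.disjoint_left.mp hS.2.2 hj
    have hzero : ∀ S ∈ univ.powerset.filter (fun S => I' ⊆ S ∧ J' ⊆ Sᶜ),
        S ∉ univ.filter (fun S : Finset ι => a S ≠ 0 ∧ I' ⊆ S ∧ Disjoint J' S) → a S = 0 := by
      intro S hS hS'
      simp only [Finset.mem_filter, Finset.mem_powerset, Finset.mem_univ, true_and] at hS hS'
      by_contra h
      exact hS' ⟨h, hS.2.1, Finset.disjoint_left.mpr fun j hj hjS =>
        (Finset.mem_compl.mp (hS.2.2 hj)) hjS⟩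
    exact (Finset.sum_subset hsub hzero).symm
  -- the nonzero atoms form a chain
  have chain : ∀ S T : Finset ι, a S ≠ 0 → a T ≠ 0 → S ⊆ T ∨ T ⊆ S := by
    intro S T hS hT
    by_contra hc
    push_neg at hc
    obtain ⟨i, hiS, hiT⟩ := Finset.not_subset.mp hc.1
    obtain ⟨j, hjT, hjS⟩ := Finset.not_subset.mp hc.2
    have hij : i ≠ j := fun h => hiT (h ▸ hjT)
    have h1 : 0 < f {i} {j} x := by
      rw [key {i} {j} (Finset.singleton_nonempty i)
        (Finset.disjoint_singleton.mpr hij)]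
      have hpos' : 0 < a S := lt_of_le_of_ne (a_nonneg S) (Ne.symm hS)
      refine lt_of_lt_of_le hpos' (Finset.single_le_sum (fun T _ => a_nonneg T) ?_)
      simp [hS, hiS, hjS]
    have h2 : 0 < f {j} {i} x := by
      rw [key {j} {i} (Finset.singleton_nonempty j)
        (Finset.disjoint_singleton.mpr hij.symm)]
      have hpos' : 0 < a T := lt_of_le_of_ne (a_nonneg T) (Ne.symm hT)
      refine lt_of_lt_of_le hpos' (Finset.single_le_sum (fun U _ => a_nonneg U) ?_)
      simp [hT, hjT, hiT]
    have hx : x ∈ Function.support (f {i} {j}) ∩ Function.support (f {j} {i}) :=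
      ⟨ne_of_gt h1, ne_of_gt h2⟩
    rw [hb i j hij] at hx
    exact hx
  -- marginals
  have hm : ∀ c : ι, f {c} ∅ x = ∑ S ∈ univ.filter (fun S => a S ≠ 0 ∧ c ∈ S), a S := by
    intro c
    rw [key {c} ∅ (Finset.singleton_nonempty c) (Finset.disjoint_empty_right _)]
    apply Finset.sum_congr _ (fun _ _ => rfl)
    ext S
    simp
  set Bs := univ.filter (fun S : Finset ι => a S ≠ 0 ∧ I ⊆ S) with hBs
  set Cs := univ.filter (fun S : Finset ι => a S ≠ 0 ∧ ¬ Disjoint J S) with hCs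
  -- min claim
  have hmin : I.inf' hI (fun i => f {i} ∅ x) = ∑ S ∈ Bs, a S := by
    obtain ⟨i₀, hi₀, hinf⟩ := Finset.exists_mem_eq_inf' hI (fun i => f {i} ∅ x)
    apply le_antisymm
    · rw [hinf, hm i₀]
      apply Finset.sum_le_sum_of_subset_of_nonneg _ (fun S _ _ => a_nonneg S)
      intro S hS
      simp only [hBs, Finset.mem_filter, Finset.mem_univ, true_and] at hS ⊢
      refine ⟨hS.1, ?_⟩
      intro j hj
      by_contra hjS
      -- every nonzero atom containing j strictly contains S
      have hstep : ∀ T : Finset ι, a T ≠ 0 → j ∈ T → (i₀ ∈ T ∧ T ≠ S) := by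
        intro T hT hjT
        have hTS : T ≠ S := fun h => hjS (h ▸ hjT)
        rcases chain T S hT hS.1 with h | h
        · exact absurd (h hjT) hjS
        · exact ⟨h hS.2, hTS⟩
      have hlt : f {j} ∅ x < f {i₀} ∅ x := by
        rw [hm j, hm i₀]
        have hSmem : S ∈ univ.filter (fun T => a T ≠ 0 ∧ i₀ ∈ T) := by
          simp [hS.1, hS.2]
        calc ∑ T ∈ univ.filter (fun T => a T ≠ 0 ∧ j ∈ T), a T
            ≤ ∑ T ∈ (univ.filter (fun T => a T ≠ 0 ∧ i₀ ∈ T)).erase S, a T := by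
              apply Finset.sum_le_sum_of_subset_of_nonneg _ (fun T _ _ => a_nonneg T)
              intro T hT
              simp only [Finset.mem_filter, Finset.mem_univ, true_and,
                Finset.mem_erase] at hT ⊢
              obtain ⟨h1, h2⟩ := hstep T hT.1 hT.2
              exact ⟨h2, hT.1, h1⟩
          _ < ∑ T ∈ univ.filter (fun T => a T ≠ 0 ∧ i₀ ∈ T), a T := by
              rw [← Finset.add_sum_erase _ _ hSmem]
              have : 0 < a S := lt_of_le_of_ne (a_nonneg S) (Ne.symm hS.1)
              linarith
      have : f {i₀} ∅ x ≤ f {j} ∅ x := by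
        rw [← hinf]; exact Finset.inf'_le (fun i => f {i} ∅ x) hj
      linarith
    · apply Finset.le_inf'
      intro i hi
      rw [hm i]
      apply Finset.sum_le_sum_of_subset_of_nonneg _ (fun S _ _ => a_nonneg S)
      intro S hS
      simp only [hBs, Finset.mem_filter, Finset.mem_univ, true_and] at hS ⊢
      exact ⟨hS.1, hS.2 hi⟩
  -- max claim
  have hmax : J.sup' hJ (fun j => f {j} ∅ x) = ∑ S ∈ Cs, a S := by
    obtain ⟨j₀, hj₀, hsup⟩ := Finset.exists_mem_eq_sup' hJ (fun j => f {j} ∅ x)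
    apply le_antisymm
    · apply Finset.sup'_le
      intro j hj
      rw [hm j]
      apply Finset.sum_le_sum_of_subset_of_nonneg _ (fun S _ _ => a_nonneg S)
      intro S hS
      simp only [hCs, Finset.mem_filter, Finset.mem_univ, true_and] at hS ⊢
      exact ⟨hS.1, fun h => Finset.disjoint_left.mp h hj hS.2⟩
    · rw [hsup, hm j₀]
      apply Finset.sum_le_sum_of_subset_of_nonneg _ (fun S _ _ => a_nonneg S)
      intro S hS
      simp only [hCs, Finset.mem_filter, Finset.mem_univ, true_and] at hS ⊢
      refine ⟨hS.1, ?_⟩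
      by_contra hj₀S
      obtain ⟨j', hj'J, hj'S⟩ := Finset.not_disjoint_iff.mp hS.2
      have hstep : ∀ T : Finset ι, a T ≠ 0 → j₀ ∈ T → (j' ∈ T ∧ T ≠ S) := by
        intro T hT hj₀T
        have hTS : T ≠ S := fun h => hj₀S (h ▸ hj₀T)
        rcases chain T S hT hS.1 with h | h
        · exact absurd (h hj₀T) hj₀S
        · exact ⟨h hj'S, hTS⟩
      have hlt : f {j₀} ∅ x < f {j'} ∅ x := by
        rw [hm j₀, hm j']
        have hSmem : S ∈ univ.filter (fun T => a T ≠ 0 ∧ j' ∈ T) := by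
          simp [hS.1, hj'S]
        calc ∑ T ∈ univ.filter (fun T => a T ≠ 0 ∧ j₀ ∈ T), a T
            ≤ ∑ T ∈ (univ.filter (fun T => a T ≠ 0 ∧ j' ∈ T)).erase S, a T := by
              apply Finset.sum_le_sum_of_subset_of_nonneg _ (fun T _ _ => a_nonneg T)
              intro T hT
              simp only [Finset.mem_filter, Finset.mem_univ, true_and,
                Finset.mem_erase] at hT ⊢
              obtain ⟨h1, h2⟩ := hstep T hT.1 hT.2
              exact ⟨h2, hT.1, h1⟩
          _ < ∑ T ∈ univ.filter (fun T => a T ≠ 0 ∧ j' ∈ T), a T := by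
              rw [← Finset.add_sum_erase _ _ hSmem]
              have : 0 < a S := lt_of_le_of_ne (a_nonneg S) (Ne.symm hS.1)
              linarith
      have : f {j'} ∅ x ≤ f {j₀} ∅ x := by
        rw [← hsup]; exact Finset.le_sup' (fun j => f {j} ∅ x) hj'J
      linarith
  -- f I J x as sum over Bs \ Cs
  have hIJ : f I J x = ∑ S ∈ Bs \ Cs, a S := by
    rw [key I J hI hd]
    apply Finset.sum_congr _ (fun _ _ => rfl)
    ext S
    simp only [Finset.mem_filter, Finset.mem_univ, true_and, Finset.mem_sdiff, hBs, hCs]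
    constructor
    · rintro ⟨h1, h2, h3⟩
      exact ⟨⟨h1, h2⟩, fun h => h.2 h3⟩
    · rintro ⟨⟨h1, h2⟩, h3⟩
      refine ⟨h1, h2, ?_⟩
      by_contra h
      exact h3 ⟨h1, h⟩
  -- comparability of Bs and Cs
  have hcomp : Bs ⊆ Cs ∨ Cs ⊆ Bs := by
    by_contra hc
    push_neg at hc
    obtain ⟨S, hSB, hSC⟩ := Finset.not_subset.mp hc.1
    obtain ⟨T, hTC, hTB⟩ := Finset.not_subset.mp hc.2
    simp only [hBs, hCs, Finset.mem_filter, Finset.mem_univ, true_and] at hSB hSC hTC hTB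
    rcases chain S T hSB.1 hTC.1 with h | h
    · exact hTB ⟨hTC.1, hSB.2.trans h⟩
    · refine hSC ⟨hSB.1, ?_⟩
      intro hdisj
      exact hTC.2 (Finset.disjoint_left.mpr fun j hj hjT => Finset.disjoint_left.mp hdisj hj (h hjT))
  -- final computation
  have hB_nonneg : (0:ℝ) ≤ ∑ S ∈ Bs, a S := Finset.sum_nonneg fun S _ => a_nonneg S
  have hfinal : f I J x =
      max (I.inf' hI (fun i => π i * g i x) - J.sup' hJ (fun j => π j * g j x)) 0 := by
    have e1 : I.inf' hI (fun i => π i * g i x) = ∑ S ∈ Bs, a S := by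
      rw [← hmin]
      exact Finset.inf'_congr hI rfl (fun i _ => (hfg i x).symm)
    have e2 : J.sup' hJ (fun j => π j * g j x) = ∑ S ∈ Cs, a S := by
      rw [← hmax]
      exact Finset.sup'_congr hJ rfl (fun j _ => (hfg j x).symm)
    rw [e1, e2, hIJ]
    rcases hcomp with h | h
    · rw [Finset.sdiff_eq_empty_iff_subset.mpr h, Finset.sum_empty]
      have : ∑ S ∈ Bs, a S ≤ ∑ S ∈ Cs, a S :=
        Finset.sum_le_sum_of_subset_of_nonneg h (fun S _ _ => a_nonneg S)
      rw [max_eq_right (by linarith)]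
    · rw [Finset.sum_sdiff_eq_sub h]
      have : ∑ S ∈ Cs, a S ≤ ∑ S ∈ Bs, a S :=
        Finset.sum_le_sum_of_subset_of_nonneg h (fun S _ _ => a_nonneg S)
      rw [max_eq_left (by linarith)]
  rw [hp x, hfinal, div_eq_inv_mul]
end

section
/- Let (I,J) ∈ 𝓘, let p_data, p_G : X → (0,∞) be positive functions, let π_c > 0 and q_c > 0 for each c ∈ N, and let g_c : X → [0,∞) be functions. Define the optimal classifiers D_v(x) := p_data(x)/(p_data(x) + p_G(x)) and D_r(c|x) := g_c(x) · q_c / p_data(x), and define r_{(I,J)}(x) := (min_{i∈I} (π_i/q_i) D_r(i|x) − max over ({(π_j/q_j) D_r(j|x) : j ∈ J} ∪ {0}))⁺. Let π_{(I,J)} > 0 and define p_{(I,J)}(x) := π_{(I,J)}^{−1} · (min_{i∈I} π_i g_i(x) − max over ({π_j g_j(x) : j ∈ J} ∪ {0}))⁺. Then for all x, x' ∈ X with r_{(I,J)}(x) > 0, the acceptance-ratio identity holds: (p_{(I,J)}(x')/p_G(x')) / (p_{(I,J)}(x)/p_G(x)) = (r_{(I,J)}(x') · (D_v(x)^{−1}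 − 1)) / (r_{(I,J)}(x) · (D_v(x')^{−1} − 1)). -/
open Finset

private lemma r_eq_aux {ι : Type*} [DecidableEq ι] (I J : Finset ι) (hI : I.Nonempty)
    (c : ℝ) (hc : 0 < c) (F : ι → ℝ) :
    max (I.inf' hI (fun i => F i / c) -
        (insert (0 : ℝ) (J.image fun j => F j / c)).max' (insert_nonempty _ _)) 0
      = max (I.inf' hI F -
        (insert (0 : ℝ) (J.image F)).max' (insert_nonempty _ _)) 0 / c := by
  have hmono : Monotone (fun t : ℝ => t / c) := fun a b hab => by
    dsimp only; gcongr
  have h1 : I.inf' hI (fun i => F i / c) = I.inf' hI F / c := by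
    rw [Finset.apply_inf'_eq_inf'_comp hI (fun t : ℝ => t / c)
      (fun a b => by simp [min_div_div_right hc.le])]
    rfl
  have h2 : (insert (0 : ℝ) (J.image fun j => F j / c)) =
      (insert (0 : ℝ) (J.image F)).image (fun t => t / c) := by
    rw [Finset.image_insert, Finset.image_image]
    simp [Function.comp_def]
  have h3 : (insert (0 : ℝ) (J.image fun j => F j / c)).max' (insert_nonempty _ _)
      = (insert (0 : ℝ) (J.image F)).max' (insert_nonempty _ _) / c := by
    simp only [h2, Finset.max'_image hmono]
  rw [h1, h3, div_sub_div_same, ← max_div_div_right hc.le, zero_div]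

/-- Equation (6) of the paper (acceptance ratio for unconditional GANs): with optimal
classifiers `D_v(x) = p_data(x)/(p_data(x)+p_G(x))`, `D_r(c|x) = g_c(x) q_c / p_data(x)`,
`r_{(I,J)}(x) = (min_{i∈I} (π_i/q_i) D_r(i|x) − max({(π_j/q_j) D_r(j|x) : j∈J} ∪ {0}))⁺`,
and `p_{(I,J)}(x) = π_{(I,J)}⁻¹ (min_{i∈I} π_i g_i(x) − max({π_j g_j(x) : j∈J} ∪ {0}))⁺`,
one has `(p_{(I,J)}(x')/p_G(x')) / (p_{(I,J)}(x)/p_G(x))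
  = r_{(I,J)}(x') (D_v(x)⁻¹ − 1) / (r_{(I,J)}(x) (D_v(x')⁻¹ − 1))`. -/
theorem s2m_acceptance_ratio_unconditional {X : Type*} {ι : Type*} [Fintype ι] [DecidableEq ι]
    (I J : Finset ι) (hI : I.Nonempty) (hd : Disjoint I J)
    (pdata pG : X → ℝ) (hpdata : ∀ x, 0 < pdata x) (hpG : ∀ x, 0 < pG x)
    (π q : ι → ℝ) (hπ : ∀ c, 0 < π c) (hq : ∀ c, 0 < q c)
    (g : ι → X → ℝ) (hg : ∀ c x, 0 ≤ g c x)
    (Dv : X → ℝ) (hDv : ∀ x, Dv x = pdata x / (pdata x + pG x))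
    (Dr : ι → X → ℝ) (hDr : ∀ c x, Dr c x = g c x * q c / pdata x)
    (r : X → ℝ)
    (hr : ∀ x, r x = max (I.inf' hI (fun i => (π i / q i) * Dr i x) -
        (insert (0 : ℝ) (J.image fun j => (π j / q j) * Dr j x)).max'
          (insert_nonempty _ _)) 0)
    (πIJ : ℝ) (hπIJ : 0 < πIJ)
    (p : X → ℝ)
    (hp : ∀ x, p x = πIJ⁻¹ * max (I.inf' hI (fun i => π i * g i x) -
        (insert (0 : ℝ) (J.image fun j => π j * g j x)).max' (insert_nonempty _ _)) 0) :
    ∀ x x' : X, 0 < r x →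
      (p x' / pG x') / (p x / pG x)
        = (r x' * ((Dv x)⁻¹ - 1)) / (r x * ((Dv x')⁻¹ - 1)) := by
  -- M x is the common "max(... , 0)" quantity
  set M : X → ℝ := fun x => max (I.inf' hI (fun i => π i * g i x) -
      (insert (0 : ℝ) (J.image fun j => π j * g j x)).max' (insert_nonempty _ _)) 0 with hM
  have hterm : ∀ (c : ι) (x : X), (π c / q c) * Dr c x = (π c * g c x) / pdata x := by
    intro c x
    rw [hDr]
    field_simp [(hq c).ne', (hpdata x).ne']
  have hrM : ∀ x, r x = M x / pdata x := by
    intro x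
    rw [hr x]
    simp only [hterm]
    exact r_eq_aux I J hI (pdata x) (hpdata x) (fun c => π c * g c x)
  have hDvinv : ∀ x, (Dv x)⁻¹ - 1 = pG x / pdata x := by
    intro x
    rw [hDv]
    rw [inv_div]
    field_simp [(hpdata x).ne']
    ring
  intro x x' hrx
  have hMx : 0 < M x := by
    have := hrM x
    rw [this] at hrx
    have h := mul_pos hrx (hpdata x)
    rwa [div_mul_cancel₀ _ (hpdata x).ne'] at h
  have hpM : ∀ y, p y = πIJ⁻¹ * M y := fun y => hp y
  rw [hpM, hpM, hrM, hrM, hDvinv, hDvinv]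
  have h1 := (hpdata x).ne'
  have h2 := (hpdata x').ne'
  have h3 := (hpG x).ne'
  have h4 := (hpG x').ne'
  have h5 := hπIJ.ne'
  have h6 := hMx.ne'
  field_simp
end

section
/- Let (I,J) ∈ 𝓘, let p_data, p_G : X → (0,∞) be positive functions, let π_c > 0, q_c > 0, and s_c > 0 for each c ∈ N, and let g_c, h_c : X → [0,∞) be functions with h_c > 0 for the fixed class c below. Define D_v(x) := p_data(x)/(p_data(x) + p_G(x)), D_r(c|x) := g_c(x) · q_c / p_data(x), D_f(c|x) := h_c(x) · s_c / p_G(x), and r_{(I,J)}(x) := (min_{i∈I} (π_i/q_i) D_r(i|x) − max over ({(π_j/q_j) D_r(j|x) : j ∈ J} ∪ {0}))⁺. Let π_{(I,J)} > 0 and p_{(I,J)}(x) := π_{(I,J)}^{−1} · (min_{i∈I} π_i g_i(x) − max over ({π_j g_j(x) : j ∈ J} ∪ {0}))⁺. Then for any fixed class c ∈ N with h_c(x) > 0 for all x, and all x, x' ∈ X with r_{(I,J)}(x) > 0, the conditional acceptance-ratio identity holds: (p_{(I,J)}(x')/h_c(x')) / (p_{(I,J)}(x)/h_c(x)) = (r_{(I,J)}(x')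 · D_f(c|x) · (D_v(x)^{−1} − 1)) / (r_{(I,J)}(x) · D_f(c|x') · (D_v(x')^{−1} − 1)). -/
open Finset

set_option maxHeartbeats 1000000 in
/-- Equation (7) of the paper (acceptance ratio for conditional GANs): with optimal classifiers
`D_v(x) = p_data(x)/(p_data(x)+p_G(x))`, `D_r(c|x) = g_c(x) q_c / p_data(x)`,
`D_f(c|x) = h_c(x) s_c / p_G(x)`, and `r_{(I,J)}`, `p_{(I,J)}` as in the main theorem, for a
fixed class `c` with `h_c > 0`, one has `(p_{(I,J)}(x')/h_c(x')) / (p_{(I,J)}(x)/h_c(x))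
  = r_{(I,J)}(x') D_f(c|x) (D_v(x)⁻¹ − 1) / (r_{(I,J)}(x) D_f(c|x') (D_v(x')⁻¹ − 1))`. -/
theorem s2m_acceptance_ratio_conditional {X : Type*} {ι : Type*} [Fintype ι] [DecidableEq ι]
    (I J : Finset ι) (hI : I.Nonempty) (hd : Disjoint I J)
    (pdata pG : X → ℝ) (hpdata : ∀ x, 0 < pdata x) (hpG : ∀ x, 0 < pG x)
    (π q s : ι → ℝ) (hπ : ∀ c, 0 < π c) (hq : ∀ c, 0 < q c) (hs : ∀ c, 0 < s c)
    (g h : ι → X → ℝ) (hg : ∀ c x, 0 ≤ g c x) (hh : ∀ c x, 0 ≤ h c x)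
    (Dv : X → ℝ) (hDv : ∀ x, Dv x = pdata x / (pdata x + pG x))
    (Dr : ι → X → ℝ) (hDr : ∀ c x, Dr c x = g c x * q c / pdata x)
    (Df : ι → X → ℝ) (hDf : ∀ c x, Df c x = h c x * s c / pG x)
    (r : X → ℝ)
    (hr : ∀ x, r x = max (I.inf' hI (fun i => (π i / q i) * Dr i x) -
        (insert (0 : ℝ) (J.image fun j => (π j / q j) * Dr j x)).max'
          (insert_nonempty _ _)) 0)
    (πIJ : ℝ) (hπIJ : 0 < πIJ)
    (p : X → ℝ)
    (hp : ∀ x, p x = πIJ⁻¹ * max (I.inf' hI (fun i => π i * g i x) -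
        (insert (0 : ℝ) (J.image fun j => π j * g j x)).max' (insert_nonempty _ _)) 0)
    (c : ι) (hc : ∀ x, 0 < h c x) :
    ∀ x x' : X, 0 < r x →
      (p x' / h c x') / (p x / h c x)
        = (r x' * Df c x * ((Dv x)⁻¹ - 1)) / (r x * Df c x' * ((Dv x')⁻¹ - 1)) := by
  intro x x' hrx
  -- Key identity: r y = πIJ * p y / pdata y
  have key : ∀ y : X, r y = πIJ * p y / pdata y := by
    intro y
    have hdy := hpdata y
    have hinf : I.inf' hI (fun i => (π i / q i) * Dr i y)
        = (I.inf' hI (fun i => π i * g i y)) / pdata y := by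
      have hcomp := Finset.apply_inf'_eq_inf'_comp hI (f := fun i => π i * g i y)
        (fun t => t / pdata y) (fun a b => (min_div_div_right hdy.le a b).symm)
      show _ = (fun t => t / pdata y) (I.inf' hI fun i => π i * g i y)
      refine Eq.trans ?_ hcomp.symm
      refine Finset.inf'_congr hI rfl ?_
      intro i _
      have h1 : q i ≠ 0 := (hq i).ne'
      have h2 : pdata y ≠ 0 := hdy.ne'
      simp only [Function.comp, hDr]
      field_simp
    have hmax : (insert (0 : ℝ) (J.image fun j => (π j / q j) * Dr j y)).max'
          (insert_nonempty _ _)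
        = ((insert (0 : ℝ) (J.image fun j => π j * g j y)).max'
          (insert_nonempty _ _)) / pdata y := by
      have hset : (insert (0 : ℝ) (J.image fun j => (π j / q j) * Dr j y))
          = (insert (0 : ℝ) (J.image fun j => π j * g j y)).image
              (fun t => t / pdata y) := by
        rw [Finset.image_insert, zero_div, Finset.image_image]
        congr 1
        refine Finset.image_congr ?_
        intro j _
        have h1 : q j ≠ 0 := (hq j).ne'
        have h2 : pdata y ≠ 0 := hdy.ne'
        simp only [Function.comp, hDr]
        field_simp
      have hmono : Monotone (fun t : ℝ => t / pdata y) := monotone_id.div_const hdy.le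
      simp only [hset]
      rw [Finset.max'_image hmono]
    rw [hr, hp, hinf, hmax, div_sub_div_same]
    rw [show (0 : ℝ) = 0 / pdata y by simp, max_div_div_right hdy.le]
    field_simp
    simp only [zero_div]
  have hpx : 0 < p x := by
    have h0 := hrx
    rw [key x] at h0
    by_contra hcon
    push_neg at hcon
    have h1 := hpdata x
    have h2 : πIJ * p x ≤ 0 := mul_nonpos_of_nonneg_of_nonpos hπIJ.le hcon
    have h3 : πIJ * p x / pdata x ≤ 0 := div_nonpos_of_nonpos_of_nonneg h2 h1.le
    linarith
  have hDvsimp : ∀ y : X, ((Dv y)⁻¹ - 1) = pG y / pdata y := by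
    intro y
    rw [hDv]
    have h1 := (hpdata y).ne'
    have h2 := (hpG y).ne'
    have h3 : pdata y + pG y ≠ 0 := (add_pos (hpdata y) (hpG y)).ne'
    field_simp
    ring
  rw [key x, key x', hDf c x, hDf c x', hDvsimp x, hDvsimp x']
  have h1 := hpdata x
  have h2 := hpdata x'
  have h3 := hc x
  have h4 := hc x'
  have h5 := hs c
  have h6 := hpG x
  have h7 := hpG x'
  have h8 : pdata x + pG x ≠ 0 := (add_pos h1 h6).ne'
  have h9 : pdata x' + pG x' ≠ 0 := (add_pos h2 h7).ne'
  field_simp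
end
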